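/- Post-processing cannot decrease the robustness of incompatibility: if M̃ = A^β and Ñ = B^γ are post-processings of POVMs A, B via stochastic matrices (Markov kernels) β, γ, then W(M̃, Ñ) ≥ W(A, B). -/

import Mathlib

open scoped ComplexOrder

open Matrix in
/-- The Choi matrix of a linear map between matrix algebras. -/
noncomputable def choi {n m : Type*} [Fintype n] [DecidableEq n] [Fintype m]
    (Φ : Matrix n n ℂ →ₗ[ℂ] Matrix m m ℂ) : Matrix (n × m) (n × m) ℂ :=
  Matrix.of fun p q => Φ (Matrix.single p.1 q.1 1) p.2 q.2

/-- Complete positivity of a linear map between matrix algebras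
(positivity of its Choi matrix). -/
def IsCP {n m : Type*} [Fintype n] [DecidableEq n] [Fintype m]
    (Φ : Matrix n n ℂ →ₗ[ℂ] Matrix m m ℂ) : Prop :=
  (choi Φ).PosSemidef

/-- Trace preservation. -/
def IsTP {n m : Type*} [Fintype n] [Fintype m]
    (Φ : Matrix n n ℂ →ₗ[ℂ] Matrix m m ℂ) : Prop :=
  ∀ ρ, (Φ ρ).trace = ρ.trace

/-- A quantum channel: a completely positive trace-preserving linear map. -/
def IsChannel {n m : Type*} [Fintype n] [DecidableEq n] [Fintype m]
    (Φ : Matrix n n ℂ →ₗ[ℂ] Matrix m m ℂ) : Prop :=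
  IsCP Φ ∧ IsTP Φ

/-- A (finite-outcome) POVM: positive operators summing to the identity. -/
def IsPOVM {n Ω : Type*} [Fintype n] [DecidableEq n] [Fintype Ω]
    (M : Ω → Matrix n n ℂ) : Prop :=
  (∀ x, (M x).PosSemidef) ∧ ∑ x, M x = 1

/-- Joint measurability of two POVMs: existence of a joint POVM with the
given marginals. -/
def JointlyMeasurable {n Ω Ω' : Type*} [Fintype n] [DecidableEq n]
    [Fintype Ω] [Fintype Ω']
    (A : Ω → Matrix n n ℂ) (B : Ω' → Matrix n n ℂ) : Prop :=
  ∃ G : Ω × Ω' → Matrix n n ℂ, IsPOVM G ∧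
    (∀ x, ∑ y, G (x, y) = A x) ∧ (∀ y, ∑ x, G (x, y) = B y)

/-- The robustness of incompatibility of a pair of POVMs. -/
noncomputable def Wrob {n Ω Ω' : Type*} [Fintype n] [DecidableEq n]
    [Fintype Ω] [Fintype Ω']
    (A : Ω → Matrix n n ℂ) (B : Ω' → Matrix n n ℂ) : ℝ :=
  sSup {t : ℝ | t ∈ Set.Icc (0 : ℝ) 1 ∧
    ∃ A₁ : Ω → Matrix n n ℂ, ∃ B₁ : Ω' → Matrix n n ℂ,
      IsPOVM A₁ ∧ IsPOVM B₁ ∧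
      JointlyMeasurable (fun x => t • A x + (1 - t) • A₁ x)
        (fun y => t • B y + (1 - t) • B₁ y)}

lemma psd_real_smul {n : Type*} [Fintype n] {M : Matrix n n ℂ}
    (hM : M.PosSemidef) {c : ℝ} (hc : 0 ≤ c) : (c • M).PosSemidef := by
  refine ⟨?_, fun x => ?_⟩
  · rw [Matrix.IsHermitian, Matrix.conjTranspose_smul, star_trivial, hM.1]
  · exact (hM.smul hc).2 x

lemma psd_sum {ι n : Type*} [Fintype n] (s : Finset ι) (f : ι → Matrix n n ℂ)
    (h : ∀ i ∈ s, (f i).PosSemidef) : (∑ i ∈ s, f i).PosSemidef := by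
  induction s using Finset.cons_induction with
  | empty => simpa using Matrix.PosSemidef.zero
  | cons a s ha ih =>
      rw [Finset.sum_cons]
      exact (h a (Finset.mem_cons_self _ _)).add
        (ih fun i hi => h i (Finset.mem_cons_of_mem hi))

lemma isPOVM_post {n Ω Γ : Type*} [Fintype n] [DecidableEq n] [Fintype Ω]
    [Fintype Γ] {M : Ω → Matrix n n ℂ} (hM : IsPOVM M)
    {β : Γ → Ω → ℝ} (hβ0 : ∀ y x, 0 ≤ β y x) (hβ1 : ∀ x, ∑ y, β y x = 1) :
    IsPOVM (fun y => ∑ x, β y x • M x) := by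
  constructor
  · intro y
    exact psd_sum _ _ fun x _ => psd_real_smul (hM.1 x) (hβ0 y x)
  · rw [Finset.sum_comm]
    calc ∑ x, ∑ y, β y x • M x = ∑ x, (∑ y, β y x) • M x := by
          simp [Finset.sum_smul]
      _ = ∑ x, M x := by
          refine Finset.sum_congr rfl fun x _ => ?_
          rw [hβ1 x, one_smul]
      _ = 1 := hM.2

theorem stmt11 {n Ω Ω' Γ Γ' : Type*} [Fintype n] [DecidableEq n]
    [Fintype Ω] [Fintype Ω'] [Fintype Γ] [Fintype Γ']
    (A : Ω → Matrix n n ℂ) (B : Ω' → Matrix n n ℂ)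
    (hA : IsPOVM A) (hB : IsPOVM B)
    -- Markov kernels (stochastic matrices) β, γ
    (β : Γ → Ω → ℝ) (γ : Γ' → Ω' → ℝ)
    (hβ : (∀ y x, 0 ≤ β y x) ∧ ∀ x, ∑ y, β y x = 1)
    (hγ : (∀ y x, 0 ≤ γ y x) ∧ ∀ x, ∑ y, γ y x = 1) :
    Wrob A B ≤
      Wrob (fun y => ∑ x, β y x • A x) (fun y => ∑ x, γ y x • B x) := by
  obtain ⟨hβ0, hβ1⟩ := hβ
  obtain ⟨hγ0, hγ1⟩ := hγ
  unfold Wrob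
  set s : Set ℝ := {t : ℝ | t ∈ Set.Icc (0 : ℝ) 1 ∧
    ∃ A₁ : Ω → Matrix n n ℂ, ∃ B₁ : Ω' → Matrix n n ℂ,
      IsPOVM A₁ ∧ IsPOVM B₁ ∧
      JointlyMeasurable (fun x => t • A x + (1 - t) • A₁ x)
        (fun y => t • B y + (1 - t) • B₁ y)} with hsdef
  set s' : Set ℝ := {t : ℝ | t ∈ Set.Icc (0 : ℝ) 1 ∧
    ∃ A₁ : Γ → Matrix n n ℂ, ∃ B₁ : Γ' → Matrix n n ℂ,
      IsPOVM A₁ ∧ IsPOVM B₁ ∧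
      JointlyMeasurable (fun y => t • (∑ x, β y x • A x) + (1 - t) • A₁ y)
        (fun y => t • (∑ x, γ y x • B x) + (1 - t) • B₁ y)} with hs'def
  have hsub : s ⊆ s' := by
    rintro t ⟨hIcc, A₁, B₁, hA₁, hB₁, G, ⟨hGpos, hGsum⟩, hGA, hGB⟩
    refine ⟨hIcc, fun y => ∑ x, β y x • A₁ x, fun y => ∑ x, γ y x • B₁ x,
      isPOVM_post hA₁ hβ0 hβ1, isPOVM_post hB₁ hγ0 hγ1,
      fun p => ∑ x, ∑ x', (β p.1 x * γ p.2 x') • G (x, x'), ⟨?_, ?_⟩, ?_, ?_⟩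
    · -- positivity of the new joint POVM
      intro p
      exact psd_sum _ _ fun x _ => psd_sum _ _ fun x' _ =>
        psd_real_smul (hGpos (x, x')) (mul_nonneg (hβ0 p.1 x) (hγ0 p.2 x'))
    · -- normalization of the new joint POVM
      have key : ∀ (x : Ω) (x' : Ω'),
          ∑ p : Γ × Γ', (β p.1 x * γ p.2 x') • G (x, x') = G (x, x') := by
        intro x x'
        rw [← Finset.sum_smul]
        have h1 : ∑ p : Γ × Γ', β p.1 x * γ p.2 x' = 1 := by
          rw [Fintype.sum_prod_type]
          simp_rw [← Finset.mul_sum, hγ1, mul_one, hβ1]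
        rw [h1, one_smul]
      calc ∑ p : Γ × Γ', ∑ x, ∑ x', (β p.1 x * γ p.2 x') • G (x, x')
          = ∑ x, ∑ x', ∑ p : Γ × Γ', (β p.1 x * γ p.2 x') • G (x, x') := by
            rw [Finset.sum_comm]
            exact Finset.sum_congr rfl fun x _ => Finset.sum_comm
        _ = ∑ x, ∑ x', G (x, x') := by
            exact Finset.sum_congr rfl fun x _ => Finset.sum_congr rfl fun x' _ => key x x'
        _ = 1 := by rw [← Fintype.sum_prod_type, hGsum]
    · -- first marginal
      intro y
      have key : ∀ (x : Ω) (x' : Ω'),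
          ∑ y' : Γ', (β y x * γ y' x') • G (x, x') = β y x • G (x, x') := by
        intro x x'
        rw [← Finset.sum_smul, ← Finset.mul_sum, hγ1, mul_one]
      calc ∑ y' : Γ', ∑ x, ∑ x', (β y x * γ y' x') • G (x, x')
          = ∑ x, ∑ x', ∑ y' : Γ', (β y x * γ y' x') • G (x, x') := by
            rw [Finset.sum_comm]
            exact Finset.sum_congr rfl fun x _ => Finset.sum_comm
        _ = ∑ x, β y x • ∑ x', G (x, x') := by
            refine Finset.sum_congr rfl fun x _ => ?_
            rw [Finset.smul_sum]
            exact Finset.sum_congr rfl fun x' _ => key x x'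
        _ = ∑ x, β y x • (t • A x + (1 - t) • A₁ x) := by
            exact Finset.sum_congr rfl fun x _ => by rw [hGA x]
        _ = t • (∑ x, β y x • A x) + (1 - t) • ∑ x, β y x • A₁ x := by
            simp only [smul_add, Finset.sum_add_distrib, Finset.smul_sum, smul_smul,
              mul_comm]
    · -- second marginal
      intro y'
      have key : ∀ (x : Ω) (x' : Ω'),
          ∑ y : Γ, (β y x * γ y' x') • G (x, x') = γ y' x' • G (x, x') := by
        intro x x'
        rw [← Finset.sum_smul, ← Finset.sum_mul, hβ1, one_mul]
      calc ∑ y : Γ, ∑ x, ∑ x', (β y x * γ y' x') • G (x, x')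
          = ∑ x', ∑ x, ∑ y : Γ, (β y x * γ y' x') • G (x, x') := by
            rw [show (∑ y : Γ, ∑ x, ∑ x', (β y x * γ y' x') • G (x, x'))
                  = ∑ y : Γ, ∑ x', ∑ x, (β y x * γ y' x') • G (x, x')
                from Finset.sum_congr rfl fun y _ => Finset.sum_comm,
              Finset.sum_comm]
            exact Finset.sum_congr rfl fun x' _ => Finset.sum_comm
        _ = ∑ x', γ y' x' • ∑ x, G (x, x') := by
            refine Finset.sum_congr rfl fun x' _ => ?_
            rw [Finset.smul_sum]
            exact Finset.sum_congr rfl fun x _ => key x x'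
        _ = ∑ x', γ y' x' • (t • B x' + (1 - t) • B₁ x') := by
            exact Finset.sum_congr rfl fun x' _ => by rw [hGB x']
        _ = t • (∑ x', γ y' x' • B x') + (1 - t) • ∑ x', γ y' x' • B₁ x' := by
            simp only [smul_add, Finset.sum_add_distrib, Finset.smul_sum, smul_smul,
              mul_comm]
  rcases Set.eq_empty_or_nonempty s with h | h
  · rw [h, Real.sSup_empty]
    exact Real.sSup_nonneg fun x hx => hx.1.1
  · exact csSup_le_csSup ⟨1, fun x hx => hx.1.2⟩ h hsub
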